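/- Let $r \in (0, 4/27)$, and suppose $u_0 \in (-2/3, 0)$ and $u_1 \in (0, 1/3)$ satisfy $u_0^2(1+u_0) = r$ and $u_1^2(1+u_1) = r$. Then $\int_{u_0}^{u_1} \dfrac{u\,\sqrt{r - u^2(1+u)}}{\sqrt{1-3u}}\, du = 0$. -/

import Mathlib

open Real Set

theorem hamiltonian_abelian_integral_zero
    (r : ℝ) (hr : r ∈ Set.Ioo (0 : ℝ) (4 / 27))
    (u₀ u₁ : ℝ) (hu₀ : u₀ ∈ Set.Ioo (-2 / 3 : ℝ) 0) (hu₁ : u₁ ∈ Set.Ioo (0 : ℝ) (1 / 3))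
    (he₀ : u₀ ^ 2 * (1 + u₀) = r) (he₁ : u₁ ^ 2 * (1 + u₁) = r) :
    ∫ u in u₀..u₁, u * Real.sqrt (r - u ^ 2 * (1 + u)) / Real.sqrt (1 - 3 * u) = 0 := by
  obtain ⟨hu₀l, hu₀r⟩ := hu₀
  obtain ⟨hu₁l, hu₁r⟩ := hu₁
  set f : ℝ → ℝ := fun x => x * Real.sqrt (1 + x) with hf_def
  set f' : ℝ → ℝ := fun x => (2 + 3 * x) / (2 * Real.sqrt (1 + x)) with hf'_def
  set g : ℝ → ℝ := fun s => 2 * s * Real.sqrt (r - s ^ 2) / Real.sqrt (4 - 27 * s ^ 2) with hg_def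
  have huIcc : (Set.uIcc u₀ u₁) = Icc u₀ u₁ := uIcc_of_le (by linarith)
  -- basic positivity facts on the interval
  have hx_facts : ∀ x ∈ Icc u₀ u₁, (-2/3 : ℝ) < x ∧ x < 1/3 := by
    intro x hx
    exact ⟨by linarith [hx.1], by linarith [hx.2]⟩
  have hderiv : ∀ x ∈ Icc u₀ u₁, HasDerivAt f (f' x) x := by
    intro x hx
    obtain ⟨h1, h2⟩ := hx_facts x hx
    have h1x : (0:ℝ) < 1 + x := by linarith
    have hs : Real.sqrt (1 + x) ≠ 0 := Real.sqrt_ne_zero'.mpr h1x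
    have hsq : HasDerivAt (fun y : ℝ => Real.sqrt (1 + y)) (1 / (2 * Real.sqrt (1 + x))) x := by
      have := (Real.hasDerivAt_sqrt (x := 1 + x) (by positivity)).comp x
        ((hasDerivAt_id x).const_add 1)
      simpa [Function.comp_def] using this
    have := (hasDerivAt_id x).mul hsq
    refine this.congr_deriv ?_
    have hss : Real.sqrt (1 + x) * Real.sqrt (1 + x) = 1 + x := Real.mul_self_sqrt h1x.le
    simp only [hf'_def, id]
    field_simp
    nlinarith [hss]
  have hfu₀ : f u₀ = -Real.sqrt r := by
    have h1x : (0:ℝ) < 1 + u₀ := by linarith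
    rw [← he₀, hf_def]
    rw [show u₀ ^ 2 * (1 + u₀) = (-u₀) ^ 2 * (1 + u₀) by ring,
      Real.sqrt_mul (by positivity), Real.sqrt_sq (by linarith)]
    ring
  have hfu₁ : f u₁ = Real.sqrt r := by
    rw [← he₁, hf_def, Real.sqrt_mul (by positivity), Real.sqrt_sq (by linarith)]
  -- key: image facts
  have himg : ∀ x ∈ Icc u₀ u₁, 0 < 4 - 27 * (f x) ^ 2 := by
    intro x hx
    obtain ⟨h1, h2⟩ := hx_facts x hx
    have h1x : (0:ℝ) ≤ 1 + x := by linarith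
    have : (f x) ^ 2 = x ^ 2 * (1 + x) := by
      rw [hf_def]; rw [mul_pow, Real.sq_sqrt h1x]
    rw [this]
    nlinarith [mul_pos (show (0:ℝ) < 1 - 3 * x by linarith) (pow_pos (show (0:ℝ) < 2 + 3 * x by linarith) 2)]
  -- substitution
  have hsub : (∫ u in u₀..u₁, u * Real.sqrt (r - u ^ 2 * (1 + u)) / Real.sqrt (1 - 3 * u))
      = ∫ s in f u₀..f u₁, g s := by
    rw [← intervalIntegral.integral_comp_smul_deriv'' (f := f) (f' := f') (g := g)
      (fun x hx => ((hderiv x (huIcc ▸ hx)).continuousAt).continuousWithinAt)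
      (fun x hx => by
        have hle : u₀ ≤ u₁ := by linarith
        rw [inf_eq_left.mpr hle, sup_eq_right.mpr hle] at hx
        exact (hderiv x (Ioo_subset_Icc_self hx)).hasDerivWithinAt)
      ?hf' ?hg]
    · apply intervalIntegral.integral_congr
      intro x hx
      rw [huIcc] at hx
      obtain ⟨h1, h2⟩ := hx_facts x hx
      have h1x : (0:ℝ) < 1 + x := by linarith
      have h13 : (0:ℝ) < 1 - 3 * x := by linarith
      have h23 : (0:ℝ) < 2 + 3 * x := by linarith
      have hsx : (0:ℝ) < Real.sqrt (1 + x) := Real.sqrt_pos.mpr h1x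
      have hfx2 : (f x) ^ 2 = x ^ 2 * (1 + x) := by
        rw [hf_def]; rw [mul_pow, Real.sq_sqrt h1x.le]
      have hden : Real.sqrt (4 - 27 * (f x) ^ 2)
          = Real.sqrt (1 - 3 * x) * (2 + 3 * x) := by
        rw [hfx2, show 4 - 27 * (x ^ 2 * (1 + x)) = (1 - 3*x) * (2 + 3*x)^2 by ring,
          Real.sqrt_mul h13.le, Real.sqrt_sq h23.le]
      simp only [smul_eq_mul, Function.comp_apply, hg_def, hf'_def]
      rw [hden, hfx2, hf_def]
      have hs13 : (0:ℝ) < Real.sqrt (1 - 3 * x) := Real.sqrt_pos.mpr h13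
      field_simp [hs13.ne', hsx.ne', h23.ne']
      rw [mul_div_mul_right _ _ (ne_of_gt (by linarith) : (2 + x * 3 : ℝ) ≠ 0)]
    case hf' =>
      rw [huIcc]
      intro x hx
      obtain ⟨h1, _⟩ := hx_facts x hx
      have h1x : (0:ℝ) < 1 + x := by linarith
      have hs : (0:ℝ) < Real.sqrt (1 + x) := Real.sqrt_pos.mpr h1x
      apply ContinuousAt.continuousWithinAt
      apply ContinuousAt.div
      · fun_prop
      · exact (continuous_const.mul (Real.continuous_sqrt.comp
          (continuous_const.add continuous_id))).continuousAt
      · exact (mul_pos two_pos hs).ne'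
    case hg =>
      intro s hs
      obtain ⟨x, hx, rfl⟩ := hs
      rw [huIcc] at hx
      have h4 := himg x hx
      apply ContinuousWithinAt.mono (t := f '' (Set.uIcc u₀ u₁)) ?_ (subset_refl _)
      apply ContinuousAt.continuousWithinAt
      apply ContinuousAt.div (by fun_prop)
      · exact (Real.continuous_sqrt.continuousAt).comp (by fun_prop)
      · exact Real.sqrt_ne_zero'.mpr h4
  rw [hsub, hfu₀, hfu₁]
  -- oddness
  have hodd : ∀ s : ℝ, g (-s) = -g s := by
    intro s
    simp only [hg_def, neg_sq]
    ring
  have := intervalIntegral.integral_comp_neg (a := -Real.sqrt r) (b := Real.sqrt r) (f := g)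
  simp only [neg_neg] at this
  have h2 : (∫ s in -Real.sqrt r..Real.sqrt r, g (-s))
      = -∫ s in -Real.sqrt r..Real.sqrt r, g s := by
    simp_rw [hodd]
    exact intervalIntegral.integral_neg
  linarith [this.symm.trans h2]
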